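/- arXiv:0905.1505 — 3 statements merged into one kernel-verified Lean document; each statement's English description precedes it below -/
import Mathlib

section
/- Let p be a prime and V a subgroup of (Q, +) such that ‖V‖_p is finite and nonzero. Then there exists v ∈ V with ‖v‖_p = ‖V‖_p, and the elements 0, v, 2v, ..., (p−1)v lie in pairwise distinct cosets of the subgroup V_{(p)} = { x ∈ V : ‖x‖_p < ‖V‖_p }. -/
open scoped ENNReal
/-- If `V ≤ (ℚ, +)` satisfies `0 < ‖V‖_p < ∞`, then there is `v ∈ V` with `‖v‖_p = ‖V‖_p`, and
`0, v, 2v, ..., (p-1)v` lie in pairwise distinct cosets of `V_{(p)} = {x ∈ V : ‖x‖_p < ‖V‖_p}`. -/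
theorem exists_maximal_norm_distinct_cosets (p : ℕ) (hp : p.Prime) (V : AddSubgroup ℚ)
    (NV : ℝ≥0∞)
    (hNV : NV = ⨆ x ∈ V, ENNReal.ofReal ((padicNorm p x : ℝ)))
    (h0 : 0 < NV) (hfin : NV < ⊤) :
    ∃ v ∈ V, ENNReal.ofReal ((padicNorm p v : ℝ)) = NV ∧
      ∀ i j : Fin p, ((i : ℤ) • v - (j : ℤ) • v ∈
        {x : ℚ | x ∈ V ∧ ENNReal.ofReal ((padicNorm p x : ℝ)) < NV}) → i = j := by
  haveI : Fact p.Prime := ⟨hp⟩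
  have hp1 : (1 : ℚ) < (p : ℚ) := by exact_mod_cast hp.one_lt
  -- every element's norm is bounded by NV.toReal
  have hub : ∀ x ∈ V, ((padicNorm p x : ℝ)) ≤ NV.toReal := by
    intro x hx
    have h1 : ENNReal.ofReal ((padicNorm p x : ℝ)) ≤ NV := by
      rw [hNV]
      exact le_iSup₂ (f := fun x _ => ENNReal.ofReal ((padicNorm p x : ℝ))) x hx
    exact (ENNReal.ofReal_le_iff_le_toReal hfin.ne).mp h1
  -- there is a nonzero element
  have hne : ∃ x, x ∈ V ∧ x ≠ 0 := by
    by_contra h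
    push_neg at h
    have : NV = 0 := by
      rw [hNV]
      refine le_antisymm (iSup₂_le fun x hx => ?_) (zero_le)
      rcases eq_or_ne x 0 with rfl | hx0
      · simp [padicNorm.zero]
      · exact absurd (h x hx) hx0
    exact h0.ne' this
  -- the set of valuations of nonzero elements of V, bounded below
  set P : ℤ → Prop := fun n => ∃ x, x ∈ V ∧ x ≠ 0 ∧ padicValRat p x = n with hP
  obtain ⟨m, hm⟩ := pow_unbounded_of_one_lt (NV.toReal) (by exact_mod_cast hp.one_lt : (1:ℝ) < (p:ℝ))
  have hbdd : ∃ b : ℤ, ∀ z : ℤ, P z → b ≤ z := by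
    refine ⟨-(m : ℤ), fun z ⟨x, hxV, hx0, hval⟩ => ?_⟩
    have h1 : padicNorm p x = (p : ℚ) ^ (-z) := by
      rw [padicNorm.eq_zpow_of_nonzero hx0, hval]
    have h2 : ((p : ℚ) ^ (-z) : ℚ) < (p : ℚ) ^ (m : ℤ) := by
      have := hub x hxV
      rw [h1] at this
      have hm' : ((p : ℚ) ^ (-z) : ℝ) < ((p : ℚ) ^ (m : ℤ) : ℝ) := by
        push_cast
        calc ((p : ℝ)) ^ (-z) ≤ NV.toReal := by push_cast at this; exact this
          _ < (p : ℝ) ^ m := hm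
          _ = (p : ℝ) ^ (m : ℤ) := by norm_cast
      exact_mod_cast hm'
    have := (zpow_lt_zpow_iff_right₀ hp1).mp h2
    omega
  have hex : ∃ z, P z := by
    obtain ⟨x, hxV, hx0⟩ := hne
    exact ⟨padicValRat p x, x, hxV, hx0, rfl⟩
  obtain ⟨n₀, ⟨v, hvV, hv0, hval⟩, hleast⟩ := Int.exists_least_of_bdd hbdd hex
  have hvnorm : padicNorm p v = (p : ℚ) ^ (-n₀) := by
    rw [padicNorm.eq_zpow_of_nonzero hv0, hval]
  -- v has maximal norm
  have hmax : ∀ x ∈ V, padicNorm p x ≤ padicNorm p v := by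
    intro x hxV
    rcases eq_or_ne x 0 with rfl | hx0
    · simp [padicNorm.zero, padicNorm.nonneg]
    · rw [padicNorm.eq_zpow_of_nonzero hx0, hvnorm]
      have : n₀ ≤ padicValRat p x := hleast _ ⟨x, hxV, hx0, rfl⟩
      exact (zpow_le_zpow_iff_right₀ hp1).mpr (by omega)
  have hNVeq : ENNReal.ofReal ((padicNorm p v : ℝ)) = NV := by
    refine le_antisymm ?_ ?_
    · rw [hNV]
      exact le_iSup₂ (f := fun x _ => ENNReal.ofReal ((padicNorm p x : ℝ))) v hvV
    · rw [hNV]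
      exact iSup₂_le fun x hx => ENNReal.ofReal_le_ofReal (by exact_mod_cast hmax x hx)
  refine ⟨v, hvV, hNVeq, fun i j ⟨_, hlt⟩ => ?_⟩
  by_contra hij
  have hd0 : (i : ℤ) - (j : ℤ) ≠ 0 := by
    intro h
    apply hij
    have : (i : ℕ) = (j : ℕ) := by omega
    exact Fin.ext this
  have hdvd : ¬ (p : ℤ) ∣ ((i : ℤ) - (j : ℤ)) := by
    intro h
    have h1 : (p : ℤ) ≤ |(i : ℤ) - (j : ℤ)| :=
      Int.le_of_dvd (abs_pos.mpr hd0) ((dvd_abs _ _).mpr h)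
    have h2 : |(i : ℤ) - (j : ℤ)| < p := by
      have hi := i.isLt
      have hj := j.isLt
      rw [abs_sub_lt_iff]
      omega
    exact absurd h1 (not_le.mpr h2)
  have hre : (i : ℤ) • v - (j : ℤ) • v = (((i : ℤ) - (j : ℤ) : ℤ) : ℚ) * v := by
    rw [zsmul_eq_mul, zsmul_eq_mul]
    push_cast
    ring
  rw [hre] at hlt
  have : padicNorm p ((((i : ℤ) - (j : ℤ) : ℤ) : ℚ) * v) = padicNorm p v := by
    rw [padicNorm.mul, (padicNorm.int_eq_one_iff _).mpr hdvd, one_mul]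
  rw [this, hNVeq] at hlt
  exact lt_irrefl _ hlt
end

section
/- Let Z be an abelian group, P = { v_0 + a_1 v_1 + ... + a_d v_d : 0 ≤ a_i < N_i } a generalized arithmetic progression in Z, and Λ ≤ Z a subgroup. Suppose P is proper (the representation of each element is unique) and p is a prime with the property that whenever a'_1 v_1 + c ∈ Λ and a''_1 v_1 + c ∈ Λ for integers a'_1, a''_1 and c ∈ Z of the appropriate form c = v_0 + Σ_{i≥2} a_i v_i, then p divides a'_1 − a''_1. Then |P ∩ Λ| / |P| ≤ ⌈N_1 / p⌉ / N_1. -/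
/-- Let `P = {v₀ + a₁v₁ + ... + a_d v_d : 0 ≤ a_i < N_i}` be a proper generalized arithmetic
progression in an abelian group `Z` and `Λ ≤ Z` a subgroup. Suppose `p` is a prime such that
whenever `a₁'•v₁ + c ∈ Λ` and `a₁''•v₁ + c ∈ Λ`, with `c = v₀ + Σ_{i≥2} a_i v_i` of the
appropriate form, then `p ∣ a₁' - a₁''`. Then `|P ∩ Λ| / |P| ≤ ⌈N₁/p⌉ / N₁`. -/
theorem gap_inter_subgroup_density_le
    {Z : Type*} [AddCommGroup Z] (d : ℕ) (hd : 1 ≤ d)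
    (v₀ : Z) (v : Fin d → Z) (N : Fin d → ℕ) (hN : ∀ i, 0 < N i)
    (P : Set Z)
    (hP : P = {x : Z | ∃ a : Fin d → ℕ, (∀ i, a i < N i) ∧
      x = v₀ + ∑ i, (a i : ℤ) • v i})
    (hproper : ∀ a b : Fin d → ℕ, (∀ i, a i < N i) → (∀ i, b i < N i) →
      v₀ + ∑ i, (a i : ℤ) • v i = v₀ + ∑ i, (b i : ℤ) • v i → a = b)
    (Λ : AddSubgroup Z) (p : ℕ) (hp : p.Prime)
    (hdvd : ∀ (a₁ a₁' : ℤ) (c : Z),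
      (∃ a : Fin d → ℕ, (∀ i, a i < N i) ∧
        c = v₀ + ∑ i ∈ Finset.univ.erase (⟨0, hd⟩ : Fin d), (a i : ℤ) • v i) →
      a₁ • v ⟨0, hd⟩ + c ∈ Λ → a₁' • v ⟨0, hd⟩ + c ∈ Λ → (p : ℤ) ∣ (a₁ - a₁')) :
    ((P ∩ (Λ : Set Z)).ncard : ℚ) / P.ncard ≤ (⌈(N ⟨0, hd⟩ : ℚ) / p⌉ : ℚ) / N ⟨0, hd⟩ := by
  classical
  set i₀ : Fin d := ⟨0, hd⟩ with hi₀
  set f : (Fin d → ℕ) → Z := fun a => v₀ + ∑ i, (a i : ℤ) • v i with hf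
  set box : Finset (Fin d → ℕ) := Fintype.piFinset (fun i => Finset.range (N i)) with hbox
  have hboxmem : ∀ a : Fin d → ℕ, a ∈ box ↔ ∀ i, a i < N i := by
    intro a; simp [hbox, Fintype.mem_piFinset]
  have hinj : Set.InjOn f box := by
    intro a ha b hb hab
    exact hproper a b (fun i => (hboxmem a).1 ha i) (fun i => (hboxmem b).1 hb i) hab
  have hPim : P = f '' box := by
    rw [hP]; ext x
    simp only [Set.mem_setOf_eq, Set.mem_image, Finset.mem_coe]
    constructor
    · rintro ⟨a, ha, rfl⟩; exact ⟨a, (hboxmem a).2 ha, rfl⟩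
    · rintro ⟨a, ha, rfl⟩; exact ⟨a, (hboxmem a).1 ha, rfl⟩
  set S : Finset (Fin d → ℕ) := box.filter (fun a => f a ∈ Λ) with hS
  have hSsub : S ⊆ box := Finset.filter_subset _ _
  have hPinter : P ∩ (Λ : Set Z) = f '' S := by
    ext x
    simp only [hPim, Set.mem_inter_iff, Set.mem_image, Finset.mem_coe, hS,
      Finset.mem_filter, SetLike.mem_coe]
    constructor
    · rintro ⟨⟨a, ha, rfl⟩, hx⟩; exact ⟨a, ⟨ha, hx⟩, rfl⟩
    · rintro ⟨a, ⟨ha, hx⟩, rfl⟩; exact ⟨⟨a, ha, rfl⟩, hx⟩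
  have hcardP : P.ncard = box.card := by
    rw [hPim, Set.ncard_image_of_injOn hinj, Set.ncard_coe_finset]
  have hcardI : (P ∩ (Λ : Set Z)).ncard = S.card := by
    rw [hPinter, Set.ncard_image_of_injOn (hinj.mono (Finset.coe_subset.mpr hSsub)),
      Set.ncard_coe_finset]
  -- splitting of f
  have hsplit : ∀ a : Fin d → ℕ,
      f a = (a i₀ : ℤ) • v i₀ + (v₀ + ∑ i ∈ Finset.univ.erase i₀, (a i : ℤ) • v i) := by
    intro a
    have h := Finset.add_sum_erase Finset.univ (fun i => (a i : ℤ) • v i) (Finset.mem_univ i₀)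
    simp only [hf]
    rw [← h]
    abel
  set M : ℕ := (N i₀ - 1) / p + 1 with hM
  set g : (Fin d → ℕ) → (Fin d → ℕ) := fun a => Function.update a i₀ 0 with hg
  set box' : Finset (Fin d → ℕ) :=
    Fintype.piFinset (fun i => if i = i₀ then {0} else Finset.range (N i)) with hbox'
  have hmaps : ∀ a ∈ S, g a ∈ box' := by
    intro a ha
    have ha' := (hboxmem a).1 (hSsub ha)
    rw [hbox', Fintype.mem_piFinset]
    intro i
    by_cases h : i = i₀
    · subst h; simp [hg]
    · simp [hg, Function.update, h, ha' i]
  have hppos : 0 < p := hp.pos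
  have hfiber : ∀ r ∈ box', (S.filter (fun a => g a = r)).card ≤ M := by
    intro r _
    have key : ∀ a ∈ S.filter (fun a => g a = r), ∀ b ∈ S.filter (fun a => g a = r),
        a i₀ = b i₀ → a = b := by
      intro a ha b hb hab
      simp only [Finset.mem_filter] at ha hb
      funext i
      by_cases h : i = i₀
      · subst h; exact hab
      · have h1 : g a i = a i := by simp [hg, Function.update, h]
        have h2 : g b i = b i := by simp [hg, Function.update, h]
        rw [← h1, ← h2, ha.2, hb.2]
    have hmod : ∀ a ∈ S.filter (fun a => g a = r), ∀ b ∈ S.filter (fun a => g a = r),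
        (p : ℤ) ∣ (a i₀ : ℤ) - (b i₀ : ℤ) := by
      intro a ha b hb
      simp only [Finset.mem_filter, hS] at ha hb
      obtain ⟨⟨haB, haΛ⟩, har⟩ := ha
      obtain ⟨⟨hbB, hbΛ⟩, hbr⟩ := hb
      set c : Z := v₀ + ∑ i ∈ Finset.univ.erase i₀, (a i : ℤ) • v i with hc
      have hcb : c = v₀ + ∑ i ∈ Finset.univ.erase i₀, (b i : ℤ) • v i := by
        rw [hc]
        congr 1
        apply Finset.sum_congr rfl
        intro i hi
        have h : i ≠ i₀ := Finset.ne_of_mem_erase hi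
        have : a i = b i := by
          have h1 : g a i = a i := by simp [hg, Function.update, h]
          have h2 : g b i = b i := by simp [hg, Function.update, h]
          rw [← h1, ← h2, har, hbr]
        rw [this]
      apply hdvd (a i₀) (b i₀) c ⟨a, (hboxmem a).1 haB, hc⟩
      · rw [← hsplit a]; exact haΛ
      · rw [hcb, ← hsplit b]; exact hbΛ
    calc (S.filter (fun a => g a = r)).card ≤ (Finset.range M).card := ?_
      _ = M := Finset.card_range M
    apply Finset.card_le_card_of_injOn (fun a => a i₀ / p)
    · intro a ha
      have haB : a ∈ box := hSsub (Finset.mem_filter.1 ha).1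
      have : a i₀ < N i₀ := (hboxmem a).1 haB i₀
      have h1 : a i₀ ≤ N i₀ - 1 := Nat.le_sub_one_of_lt this
      have : a i₀ / p ≤ (N i₀ - 1) / p := Nat.div_le_div_right h1
      simp only [Finset.mem_coe, Finset.mem_range, hM]
      omega
    · intro a ha b hb hdiv
      apply key a ha b hb
      have hdvd' := hmod a ha b hb
      have hdiv' : a i₀ / p = b i₀ / p := hdiv
      clear hdiv
      have hmodeq : a i₀ % p = b i₀ % p := by
        have h : (b i₀ : ℤ) % p = (a i₀ : ℤ) % p := Int.modEq_iff_dvd.mpr hdvd'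
        omega
      calc a i₀ = p * (a i₀ / p) + a i₀ % p := (Nat.div_add_mod _ _).symm
        _ = p * (b i₀ / p) + b i₀ % p := by rw [hdiv', hmodeq]
        _ = b i₀ := Nat.div_add_mod _ _
  have hScard : S.card ≤ M * box'.card :=
    Finset.card_le_mul_card_image_of_maps_to hmaps M hfiber
  set R : ℕ := ∏ i ∈ Finset.univ.erase i₀, N i with hR
  have hbox'card : box'.card = R := by
    rw [hbox', Fintype.card_piFinset, ← Finset.mul_prod_erase Finset.univ _ (Finset.mem_univ i₀)]
    rw [if_pos rfl, Finset.card_singleton, one_mul, hR]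
    exact Finset.prod_congr rfl
      (fun i hi => by rw [if_neg (Finset.ne_of_mem_erase hi), Finset.card_range])
  have hboxcard : box.card = N i₀ * R := by
    rw [hbox, Fintype.card_piFinset]
    simp only [Finset.card_range]
    rw [← Finset.mul_prod_erase Finset.univ N (Finset.mem_univ i₀), hR]
  have hRpos : 0 < R := Finset.prod_pos (fun i _ => hN i)
  have hN₀ : 0 < N i₀ := hN i₀
  -- ceiling bound
  have hMceil : (M : ℚ) ≤ (⌈(N i₀ : ℚ) / p⌉ : ℚ) := by
    have hplt : (0 : ℚ) < p := by exact_mod_cast hppos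
    have h2 : ((N i₀ - 1) / p) * p < N i₀ := by
      have := Nat.div_mul_le_self (N i₀ - 1) p
      omega
    have h1 : ((M : ℤ) - 1) < ⌈(N i₀ : ℚ) / p⌉ := by
      have hM1 : ((M : ℤ) - 1) = (((N i₀ - 1) / p : ℕ) : ℤ) := by
        rw [hM]; push_cast; ring
      rw [Int.lt_ceil, hM1, lt_div_iff₀ hplt]
      exact_mod_cast h2
    have h4 : (M : ℤ) ≤ ⌈(N i₀ : ℚ) / p⌉ := by omega
    have h5 := (@Int.cast_le ℚ _ _ _).mpr h4
    rwa [Int.cast_natCast] at h5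
  -- final arithmetic
  rw [hcardP, hcardI, hboxcard]
  have hstep : (S.card : ℚ) / (N i₀ * R : ℕ) ≤ (M : ℚ) / N i₀ := by
    rw [div_le_div_iff₀ (by positivity) (by exact_mod_cast hN₀)]
    have : (S.card : ℚ) ≤ M * R := by
      calc (S.card : ℚ) ≤ (M * box'.card : ℕ) := by exact_mod_cast hScard
        _ = M * R := by rw [hbox'card]; push_cast; ring
    calc (S.card : ℚ) * N i₀ ≤ (M * R) * N i₀ := by
          apply mul_le_mul_of_nonneg_right this (by positivity)
      _ = (M : ℚ) * (N i₀ * R : ℕ) := by push_cast; ring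
  refine hstep.trans ?_
  gcongr
end

section
/- Let L ⊆ Σ* be a regular language over a finite alphabet Σ. Then there exists a constant C such that for all n, the number of words in L of length at most n+1 is at most C times the number of words in L of length at most n (where we interpret the inequality as holding whenever L contains at least one word of length at most n). -/
open Classical in
/-- **Growth of regular languages.** If `L` is a regular language over a finite alphabet, then
there is a constant `C` such that `|L^{≤ n+1}| ≤ C · |L^{≤ n}|` whenever `L^{≤ n}` is nonempty. -/
theorem regular_language_growth {α : Type} [Fintype α] (L : Language α)
    (hL : L.IsRegular) :
    ∃ C : ℕ, ∀ n : ℕ,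
      {w : List α | w ∈ L ∧ w.length ≤ n}.Nonempty →
      {w : List α | w ∈ L ∧ w.length ≤ n + 1}.ncard ≤
        C * {w : List α | w ∈ L ∧ w.length ≤ n}.ncard := by
  obtain ⟨σ, _, M, rfl⟩ := hL
  set k := Fintype.card σ with hk
  -- finset of short lists (length ≤ k)
  set short : Finset (List α) := (List.finite_length_le α k).toFinset with hshort
  set m : ℕ := short.card with hm
  refine ⟨(k + 1) * m + 1, fun n hne => ?_⟩
  set B : Set (List α) := {w : List α | w ∈ M.accepts ∧ w.length ≤ n} with hB
  set E : Set (List α) := {w : List α | w ∈ M.accepts ∧ w.length = n + 1} with hE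
  have hBfin : B.Finite := (List.finite_length_le α n).subset (fun w hw => hw.2)
  have hEfin : E.Finite := (List.finite_length_le α (n + 1)).subset
    (fun w hw => le_of_eq hw.2)
  have hBpos : 1 ≤ B.ncard := (Set.ncard_pos hBfin).2 hne
  -- the union bound
  have hsub : {w : List α | w ∈ M.accepts ∧ w.length ≤ n + 1} ⊆ B ∪ E := by
    intro w hw
    rcases Nat.lt_or_ge w.length (n + 1) with h | h
    · exact Or.inl ⟨hw.1, Nat.lt_succ_iff.mp h⟩
    · exact Or.inr ⟨hw.1, le_antisymm hw.2 h⟩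
  have key : E.ncard ≤ (k + 1) * m * B.ncard := by
    rcases Nat.lt_or_ge (n + 1) k with hcase | hcase
    · -- n+1 < k : just bound E by the number of short lists
      have h1 : E.ncard ≤ m := by
        rw [hm, ← Set.ncard_coe_finset short]
        refine Set.ncard_le_ncard ?_ short.finite_toSet
        intro w hw
        simp only [hshort, Finset.coe_sort_coe, Set.Finite.coe_toFinset, Set.mem_setOf_eq]
        exact le_of_lt (hw.2 ▸ hcase)
      calc E.ncard ≤ m := h1
        _ = m * 1 := (Nat.mul_one m).symm
        _ ≤ (k + 1) * m * B.ncard :=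
            Nat.mul_le_mul (Nat.le_mul_of_pos_left m k.succ_pos) hBpos
    · -- k ≤ n+1 : pumping argument
      -- decomposition predicate
      set P : List α → Prop := fun w => ∃ d : List α × List α × List α,
        w = d.1 ++ d.2.1 ++ d.2.2 ∧ d.1.length + d.2.1.length ≤ k ∧ d.2.1 ≠ [] ∧
          d.1 ++ d.2.2 ∈ M.accepts with hP
      have hPE : ∀ w ∈ E, P w := by
        intro w hw
        obtain ⟨a, b, c, hdec, hlen, hbne, hpump⟩ := M.pumping_lemma hw.1 (hw.2 ▸ hcase)
        refine ⟨(a, b, c), hdec, hlen, hbne, ?_⟩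
        apply hpump
        change (a, b, c).1 ++ (a, b, c).2.2 ∈ ({a} * KStar.kstar {b} * {c} : Language α)
        rw [Language.mem_mul]
        exact ⟨a, Language.mem_mul.2 ⟨a, rfl, [], Language.nil_mem_kstar _, List.append_nil a⟩,
          c, rfl, rfl⟩
      set f : List α → List α := fun w =>
        if h : P w then (choose h).1 ++ (choose h).2.2 else [] with hf
      set g : List α → ℕ × List α := fun w =>
        if h : P w then ((choose h).1.length, (choose h).2.1) else (0, []) with hg
      -- properties of f and g on E
      have hrec : ∀ w ∈ E, f w ∈ B ∧
          w = (f w).take (g w).1 ++ (g w).2 ++ (f w).drop (g w).1 ∧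
          (g w).1 ≤ k ∧ (g w).2 ∈ short := by
        intro w hw
        have h := hPE w hw
        obtain ⟨hdec, hlen, hbne, hacc⟩ := choose_spec h
        simp only [hf, hg, dif_pos h]
        set a := (choose h).1
        set b := (choose h).2.1
        set c := (choose h).2.2
        have hta : (a ++ c).take a.length = a := by
          simp [List.take_left]
        have htc : (a ++ c).drop a.length = c := by
          simp [List.drop_left]
        have hblen : 1 ≤ b.length := List.length_pos_iff.2 hbne
        refine ⟨⟨hacc, ?_⟩, ?_, ?_, ?_⟩
        · have := hw.2
          rw [hdec] at this
          simp only [List.length_append] at this ⊢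
          omega
        · rw [hta, htc]; exact hdec
        · omega
        · simp only [hshort, Set.Finite.mem_toFinset, Set.mem_setOf_eq]; omega
      -- count via finsets
      have hEcard : E.ncard = hEfin.toFinset.card := Set.ncard_eq_toFinset_card E hEfin
      have hBcard : B.ncard = hBfin.toFinset.card := Set.ncard_eq_toFinset_card B hBfin
      rw [hEcard, hBcard]
      have himg : hEfin.toFinset.image f ⊆ hBfin.toFinset := by
        intro v hv
        simp only [Finset.mem_image, Set.Finite.mem_toFinset] at hv ⊢
        obtain ⟨w, hw, rfl⟩ := hv
        exact (hrec w hw).1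
      have hfib : ∀ v ∈ hEfin.toFinset.image f,
          (hEfin.toFinset.filter fun w => f w = v).card ≤ (k + 1) * m := by
        intro v _
        have : ((Finset.range (k + 1)) ×ˢ short).card = (k + 1) * m := by
          simp [hm]
        rw [← this]
        apply Finset.card_le_card_of_injOn g
        · intro w hw
          simp only [Finset.mem_coe, Finset.mem_filter, Set.Finite.mem_toFinset] at hw
          obtain ⟨hwE, -⟩ := hw
          obtain ⟨-, -, h1, h2⟩ := hrec w hwE
          simp only [Finset.mem_coe, Finset.mem_product, Finset.mem_range]
          exact ⟨Nat.lt_succ_of_le h1, h2⟩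
        · intro w1 hw1 w2 hw2 hgw
          simp only [Finset.coe_filter, Set.Finite.mem_toFinset, Set.mem_setOf_eq] at hw1 hw2
          obtain ⟨hw1E, hf1⟩ := hw1
          obtain ⟨hw2E, hf2⟩ := hw2
          have r1 := (hrec w1 hw1E).2.1
          have r2 := (hrec w2 hw2E).2.1
          rw [r1, r2, hf1, hf2, hgw]
      calc hEfin.toFinset.card ≤ (k + 1) * m * (hEfin.toFinset.image f).card :=
            Finset.card_le_mul_card_image (f := f) hEfin.toFinset ((k + 1) * m) hfib
        _ ≤ (k + 1) * m * hBfin.toFinset.card := by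
            exact Nat.mul_le_mul_left _ (Finset.card_le_card himg)
  calc {w : List α | w ∈ M.accepts ∧ w.length ≤ n + 1}.ncard
      ≤ (B ∪ E).ncard := Set.ncard_le_ncard hsub (hBfin.union hEfin)
    _ ≤ B.ncard + E.ncard := Set.ncard_union_le B E
    _ ≤ B.ncard + (k + 1) * m * B.ncard := by omega
    _ = ((k + 1) * m + 1) * B.ncard := by ring
end
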